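/- arXiv:2011.05610 — 4 statements merged into one kernel-verified Lean document; each statement's English description precedes it below -/
import Mathlib

section
/- If T[MS[i+1].pos − 1] = P[i], then MS[i].len = MS[i+1].len + 1 and the position MS[i+1].pos − 1 witnesses an occurrence of the length-(MS[i+1].len + 1) prefix of P[i..m−1] in T; i.e., setting MS[i].pos = MS[i+1].pos − 1 gives valid matching statistics at i. -/
/-- if `MS[i+1] = (pos, len)` are valid matching statistics at
position `i+1` (there is an occurrence `T[pos..pos+len-1] = P[i+1..i+len]`
which is maximal), `pos ≥ 1`, and `T[pos-1] = P[i]` (i.e. `BWT[q] = P[i]`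
for `q = ISA[pos]`), then setting `MS[i] = (pos - 1, len + 1)` gives valid
matching statistics at position `i`: the length-`(len+1)` prefix of
`P[i..m-1]` occurs at `T[pos-1..]` and no longer prefix occurs in `T`. -/
theorem ms_step_matching_char {α : Type*} (T P : List α)
    (i pos len : ℕ)
    (hpos : 1 ≤ pos)
    (hlenP : i + 1 + len ≤ P.length)
    (hlenT : pos + len ≤ T.length)
    (hoccur : (T.drop pos).take len = (P.drop (i + 1)).take len)
    (hmaximal : i + 1 + len = P.length ∨ ¬ ((P.drop (i + 1)).take (len + 1) <:+: T))
    (hchar : T[pos - 1]? = P[i]?) :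
    (P.drop i).take (len + 1) = (T.drop (pos - 1)).take (len + 1) ∧
      (i + (len + 1) = P.length ∨ ¬ ((P.drop i).take (len + 2) <:+: T)) := by
  have hiP : i < P.length := by omega
  have hposT : pos - 1 < T.length := by omega
  have hdP : P.drop i = P[i] :: P.drop (i + 1) := by
    rw [List.drop_eq_getElem_cons hiP]
  have hpos1 : pos - 1 + 1 = pos := by omega
  have hdT : T.drop (pos - 1) = T[pos - 1] :: T.drop pos := by
    rw [List.drop_eq_getElem_cons hposT, hpos1]
  have hchar' : T[pos - 1] = P[i] := by
    have := hchar
    rw [List.getElem?_eq_getElem hposT, List.getElem?_eq_getElem hiP] at this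
    exact Option.some.inj this
  constructor
  · rw [hdP, hdT, List.take_succ_cons, List.take_succ_cons, hchar', hoccur]
  · rcases hmaximal with h | h
    · left; omega
    · right
      intro hinf
      apply h
      rw [hdP, List.take_succ_cons] at hinf
      exact ((List.suffix_cons _ _).isInfix).trans hinf
end

section
/- If the suffix array SA of T lists suffixes in increasing lexicographic order and LCP[i] denotes the length of the longest common prefix of the suffixes SA[i−1] and SA[i], then for i < j, the longest common prefix of suffixes SA[i] and SA[j] equals min(LCP[i+1], ..., LCP[j]). -/
/-- `lce T a b` = length of the longest common prefix of the suffixes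
`T[a..]` and `T[b..]`. -/
noncomputable def lce {α : Type*} (T : List α) (a b : ℕ) : ℕ :=
  letI := Classical.decPred (fun ℓ : ℕ => (T.drop a).take ℓ = (T.drop b).take ℓ)
  Nat.findGreatest (fun ℓ : ℕ => (T.drop a).take ℓ = (T.drop b).take ℓ) T.length

lemma lce_le {α : Type*} (T : List α) (a b : ℕ) : lce T a b ≤ T.length := by
  letI := Classical.decPred (fun ℓ : ℕ => (T.drop a).take ℓ = (T.drop b).take ℓ)
  unfold lce
  exact Nat.findGreatest_le _

lemma lce_spec {α : Type*} (T : List α) (a b : ℕ) :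
    (T.drop a).take (lce T a b) = (T.drop b).take (lce T a b) := by
  letI := Classical.decPred (fun ℓ : ℕ => (T.drop a).take ℓ = (T.drop b).take ℓ)
  unfold lce
  exact Nat.findGreatest_spec (P := fun ℓ : ℕ => (T.drop a).take ℓ = (T.drop b).take ℓ)
    (Nat.zero_le _) rfl

lemma le_lce {α : Type*} {T : List α} {a b m : ℕ} (hm : m ≤ T.length)
    (h : (T.drop a).take m = (T.drop b).take m) : m ≤ lce T a b := by
  letI := Classical.decPred (fun ℓ : ℕ => (T.drop a).take ℓ = (T.drop b).take ℓ)
  unfold lce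
  exact Nat.le_findGreatest hm h

lemma take_eq_of_le_lce {α : Type*} {T : List α} {a b m : ℕ} (hm : m ≤ lce T a b) :
    (T.drop a).take m = (T.drop b).take m := by
  have h := lce_spec T a b
  calc (T.drop a).take m = ((T.drop a).take (lce T a b)).take m := by
        rw [List.take_take, min_eq_left hm]
    _ = ((T.drop b).take (lce T a b)).take m := by rw [h]
    _ = (T.drop b).take m := by rw [List.take_take, min_eq_left hm]

/-- If `x < y < z` lexicographically and `x`, `z` agree on their first `m`
characters, then so does `y`. -/
lemma sandwich {α : Type*} [LinearOrder α] :
    ∀ (m : ℕ) (x y z : List α), List.Lex (· < ·) x y → List.Lex (· < ·) y z →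
      x.take m = z.take m → y.take m = x.take m
  | 0, _, _, _, _, _, _ => by simp
  | (m + 1), x, y, z, hxy, hyz, hxz => by
    cases x with
    | nil =>
      cases z with
      | nil => cases hyz
      | cons c z' => simp at hxz
    | cons a x' =>
      cases z with
      | nil => simp at hxz
      | cons c z' =>
        simp only [List.take_succ_cons, List.cons.injEq] at hxz
        obtain ⟨hac, hxz'⟩ := hxz
        subst hac
        cases y with
        | nil => cases hxy
        | cons b y' =>
          cases hxy with
          | cons h1 =>
            cases hyz with
            | cons h2 =>
              have := sandwich m x' y' z' h1 h2 hxz'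
              simp [this]
            | rel h2 => exact absurd h2 (lt_irrefl _)
          | rel h1 =>
            cases hyz with
            | cons h2 => exact absurd h1 (lt_irrefl _)
            | rel h2 => exact absurd (h1.trans h2) (lt_irrefl _)

lemma lower_bound {α : Type*} [LinearOrder α]
    (T : List α) (SA : ℕ → ℕ) (i : ℕ) :
    ∀ j, (hij : i < j) → j < T.length →
      (Finset.Icc (i + 1) j).inf' (Finset.nonempty_Icc.mpr hij)
        (fun k => lce T (SA (k - 1)) (SA k)) ≤ lce T (SA i) (SA j) := by
  intro j hij
  induction j, hij using Nat.le_induction with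
  | base =>
    intro hlen
    simp
  | succ j hj1 IH =>
    intro hlen
    have hij : i < j + 1 := by omega
    have hjlen : j < T.length := Nat.lt_of_succ_lt hlen
    have hij' : i < j := hj1
    -- key inequality
    have key : min (lce T (SA i) (SA j)) (lce T (SA j) (SA (j + 1)))
        ≤ lce T (SA i) (SA (j + 1)) := by
      apply le_lce
      · exact le_trans (min_le_left _ _) (lce_le _ _ _)
      · have h1 : (T.drop (SA i)).take (min (lce T (SA i) (SA j)) (lce T (SA j) (SA (j + 1))))
            = (T.drop (SA j)).take (min (lce T (SA i) (SA j)) (lce T (SA j) (SA (j + 1)))) :=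
          take_eq_of_le_lce (min_le_left _ _)
        have h2 : (T.drop (SA j)).take (min (lce T (SA i) (SA j)) (lce T (SA j) (SA (j + 1))))
            = (T.drop (SA (j + 1))).take (min (lce T (SA i) (SA j)) (lce T (SA j) (SA (j + 1)))) :=
          take_eq_of_le_lce (min_le_right _ _)
        exact h1.trans h2
    have hIcc : Finset.Icc (i + 1) (j + 1) = insert (j + 1) (Finset.Icc (i + 1) j) := by
      ext x
      simp only [Finset.mem_Icc, Finset.mem_insert]
      omega
    have hne : (Finset.Icc (i + 1) j).Nonempty := Finset.nonempty_Icc.mpr hij'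
    calc (Finset.Icc (i + 1) (j + 1)).inf' (Finset.nonempty_Icc.mpr hij)
          (fun k => lce T (SA (k - 1)) (SA k))
        = min (lce T (SA j) (SA (j + 1)))
            ((Finset.Icc (i + 1) j).inf' hne (fun k => lce T (SA (k - 1)) (SA k))) := by
          simp_rw [hIcc]
          rw [Finset.inf'_insert (H := hne)]
          simp [min_comm]
      _ ≤ min (lce T (SA j) (SA (j + 1))) (lce T (SA i) (SA j)) :=
          min_le_min (le_refl _) (IH hjlen)
      _ = min (lce T (SA i) (SA j)) (lce T (SA j) (SA (j + 1))) := min_comm _ _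
      _ ≤ _ := key

/-- if `SA` lists the suffixes of `T` in increasing lexicographic
order and `LCP[k] = lce(SA[k-1], SA[k])`, then for ranks `i < j` the longest
common prefix of the suffixes `SA[i]` and `SA[j]` equals
`min(LCP[i+1], ..., LCP[j])`. -/
theorem lce_eq_range_min_lcp {α : Type*} [LinearOrder α]
    (T : List α) (SA : ℕ → ℕ)
    (hSA : ∀ i, i < T.length → SA i < T.length)
    (hsorted : ∀ i j, i < j → j < T.length →
      List.Lex (· < ·) (T.drop (SA i)) (T.drop (SA j)))
    (i j : ℕ) (hij : i < j) (hj : j < T.length) :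
    lce T (SA i) (SA j) =
      (Finset.Icc (i + 1) j).inf' (Finset.nonempty_Icc.mpr hij)
        (fun k => lce T (SA (k - 1)) (SA k)) := by
  apply le_antisymm
  · apply Finset.le_inf'
    intro k hk
    obtain ⟨hk1, hk2⟩ := Finset.mem_Icc.mp hk
    set m := lce T (SA i) (SA j) with hm
    have hspec : (T.drop (SA i)).take m = (T.drop (SA j)).take m := lce_spec T (SA i) (SA j)
    apply le_lce (lce_le T (SA i) (SA j))
    have hk1' : i ≤ k - 1 := by omega
    have hklen : k - 1 < T.length := by omega
    have hklen' : k < T.length := by omega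
    have h1 : (T.drop (SA (k - 1))).take m = (T.drop (SA i)).take m := by
      rcases lt_or_eq_of_le hk1' with h | h
      · exact sandwich m _ _ _ (hsorted i (k - 1) h hklen)
          (hsorted (k - 1) j (by omega) hj) hspec
      · rw [← h]
    have h2 : (T.drop (SA k)).take m = (T.drop (SA i)).take m := by
      rcases lt_or_eq_of_le hk2 with h | h
      · exact sandwich m _ _ _ (hsorted i k (by omega) hklen')
          (hsorted k j h hj) hspec
      · rw [h]; exact hspec.symm
    exact h1.trans h2.symm
  · exact lower_bound T SA i j hij hj
end

section
/- The LF mapping of the BWT is a bijection on positions, and following LF from the rank of suffix T[p..] yields the rank of suffix T[p−1..]: LF(ISA[p]) = ISA[p−1] for all p ≥ 1. -/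
/-- The Burrows-Wheeler transform: `bwt T SA i = T[SA[i] - 1]`, with `T[-1]`
interpreted circularly as the last character of `T`. -/
def bwt {α : Type*} [Inhabited α] (T : List α) (SA : ℕ → ℕ) (i : ℕ) : α :=
  T[(SA i + T.length - 1) % T.length]!

/-- `cnt T c` = number of characters of `T` strictly smaller than `c`. -/
def cnt {α : Type*} [LinearOrder α] [Inhabited α] (T : List α) (c : α) : ℕ :=
  ((Finset.range T.length).filter (fun j => T[j]! < c)).card

/-- `rankBWT T SA c i` = number of occurrences of `c` in `BWT[0..i]`. -/
def rankBWT {α : Type*} [LinearOrder α] [Inhabited α]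
    (T : List α) (SA : ℕ → ℕ) (c : α) (i : ℕ) : ℕ :=
  ((Finset.range (i + 1)).filter (fun j => bwt T SA j = c)).card

/-- The LF mapping, in 0-based indexing:
`LF(i) = C[BWT[i]] + rank_{BWT[i]}(BWT, i) - 1`, where the rank counts
occurrences of `BWT[i]` in `BWT[0..i]` inclusively. -/
def lf {α : Type*} [LinearOrder α] [Inhabited α]
    (T : List α) (SA : ℕ → ℕ) (i : ℕ) : ℕ :=
  cnt T (bwt T SA i) + rankBWT T SA (bwt T SA i) i - 1


section
variable {α : Type*} [LinearOrder α] [Inhabited α]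

lemma lex_cons_iff' {a b : α} {l₁ l₂ : List α} :
    List.Lex (· < ·) (a :: l₁) (b :: l₂) ↔ a < b ∨ (a = b ∧ List.Lex (· < ·) l₁ l₂) := by
  constructor
  · intro h
    cases h with
    | cons h => exact Or.inr ⟨rfl, h⟩
    | rel h => exact Or.inl h
  · rintro (h | ⟨rfl, h⟩)
    · exact List.Lex.rel h
    · exact List.Lex.cons h

lemma lex_asymm' {l₁ l₂ : List α} (h : List.Lex (· < ·) l₁ l₂) :
    ¬ List.Lex (· < ·) l₂ l₁ :=
  fun h' => (List.Lex.asymm (· < ·)).asymm _ _ h h'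

lemma drop_cons' (T : List α) (p : ℕ) (hp : p < T.length) :
    T.drop p = T[p]! :: T.drop (p + 1) := by
  rw [getElem!_pos T p hp]
  exact List.drop_eq_getElem_cons hp
end

/-- for a text `T` ending in a unique smallest sentinel, with
suffix array `SA` and inverse `ISA`, the LF mapping is a bijection on the
positions `{0, ..., n-1}`, and `LF(ISA[p]) = ISA[p-1]` for all `p ≥ 1`. -/
theorem lf_bijective_and_steps_back {α : Type*} [LinearOrder α] [Inhabited α]
    (T : List α) (SA ISA : ℕ → ℕ)
    (hn : 0 < T.length)
    (hSA : ∀ i, i < T.length → SA i < T.length)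
    (hsorted : ∀ i j, i < j → j < T.length →
      List.Lex (· < ·) (T.drop (SA i)) (T.drop (SA j)))
    (hISA : ∀ p, p < T.length → ISA p < T.length ∧ SA (ISA p) = p)
    (hsent : ∀ i, i < T.length - 1 → T[T.length - 1]! < T[i]!) :
    Set.BijOn (lf T SA) (Set.Iio T.length) (Set.Iio T.length) ∧
      ∀ p, 1 ≤ p → p < T.length → lf T SA (ISA p) = ISA (p - 1) := by
  classical
  have hinj : ∀ i j, i < T.length → j < T.length → SA i = SA j → i = j := by
    intro i j hi hj hij
    by_contra hne
    rcases lt_trichotomy i j with h | h | h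
    · have h2 := hsorted i j h hj
      rw [hij] at h2
      exact lex_asymm' h2 h2
    · exact hne h
    · have h2 := hsorted j i h hi
      rw [hij] at h2
      exact lex_asymm' h2 h2
  have hlex_iff : ∀ i j, i < T.length → j < T.length →
      (List.Lex (· < ·) (T.drop (SA i)) (T.drop (SA j)) ↔ i < j) := by
    intro i j hi hj
    constructor
    · intro h
      by_contra hle
      push_neg at hle
      rcases eq_or_lt_of_le hle with rfl | hlt
      · exact lex_asymm' h h
      · exact lex_asymm' h (hsorted j i hlt hi)
    · intro h; exact hsorted i j h hj
  have hISAlt : ∀ p, p < T.length → ISA p < T.length := fun p hp => (hISA p hp).1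
  have hSAinv : ∀ p, p < T.length → SA (ISA p) = p := fun p hp => (hISA p hp).2
  have hISAinv : ∀ i, i < T.length → ISA (SA i) = i := by
    intro i hi
    exact hinj _ _ (hISAlt _ (hSA i hi)) hi (hSAinv _ (hSA i hi))
  have hmod : ∀ s, 1 ≤ s → s < T.length → (s + T.length - 1) % T.length = s - 1 := by
    intro s h1 h2
    have h3 : s + T.length - 1 = (s - 1) + T.length := by omega
    rw [h3, Nat.add_mod_right]
    exact Nat.mod_eq_of_lt (by omega)
  have hmod0 : (0 + T.length - 1) % T.length = T.length - 1 := by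
    rw [Nat.zero_add]
    exact Nat.mod_eq_of_lt (by omega)
  have hcnt : ∀ c : α,
      ((Finset.range T.length).filter (fun k => T[SA k]! < c)).card = cnt T c := by
    intro c
    unfold cnt
    apply Finset.card_nbij' SA ISA
    · intro k hk
      rw [Finset.mem_coe, Finset.mem_filter, Finset.mem_range] at *
      exact ⟨hSA k hk.1, hk.2⟩
    · intro p hp
      rw [Finset.mem_coe, Finset.mem_filter, Finset.mem_range] at *
      refine ⟨hISAlt p hp.1, ?_⟩
      rw [hSAinv p hp.1]
      exact hp.2
    · intro k hk
      rw [Finset.mem_coe, Finset.mem_filter, Finset.mem_range] at hk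
      exact hISAinv k hk.1
    · intro p hp
      rw [Finset.mem_coe, Finset.mem_filter, Finset.mem_range] at hp
      exact hSAinv p hp.1
  have hmain : ∀ i, i < T.length →
      cnt T (bwt T SA i) + rankBWT T SA (bwt T SA i) i
        = ISA ((SA i + T.length - 1) % T.length) + 1 := by
    intro i hi
    set c := bwt T SA i with hc
    set q := (SA i + T.length - 1) % T.length with hq
    have hqlt : q < T.length := Nat.mod_lt _ hn
    have hqc : T[q]! = c := rfl
    have hA : ISA q = ((Finset.range T.length).filter
        (fun k => List.Lex (· < ·) (T.drop (SA k)) (T.drop q))).card := by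
      have he : ((Finset.range T.length).filter
          (fun k => List.Lex (· < ·) (T.drop (SA k)) (T.drop q))) = Finset.range (ISA q) := by
        ext k
        simp only [Finset.mem_filter, Finset.mem_range]
        constructor
        · rintro ⟨hk, hlex⟩
          rw [← hSAinv q hqlt] at hlex
          exact (hlex_iff k (ISA q) hk (hISAlt q hqlt)).1 hlex
        · intro hk
          have hk' : k < T.length := lt_trans hk (hISAlt q hqlt)
          refine ⟨hk', ?_⟩
          rw [← hSAinv q hqlt]
          exact (hlex_iff k (ISA q) hk' (hISAlt q hqlt)).2 hk
      rw [he, Finset.card_range]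
    have hdisj : Disjoint
        ((Finset.range T.length).filter (fun k => T[SA k]! < c))
        ((Finset.range T.length).filter
          (fun k => T[SA k]! = c ∧ List.Lex (· < ·) (T.drop (SA k + 1)) (T.drop (q + 1)))) := by
      rw [Finset.disjoint_left]
      intro k hk1 hk2
      rw [Finset.mem_filter] at hk1 hk2
      have h := hk1.2
      rw [hk2.2.1] at h
      exact lt_irrefl _ h
    have hsplit : ((Finset.range T.length).filter
        (fun k => List.Lex (· < ·) (T.drop (SA k)) (T.drop q))).card
        = ((Finset.range T.length).filter (fun k => T[SA k]! < c)).card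
          + ((Finset.range T.length).filter
            (fun k => T[SA k]! = c ∧ List.Lex (· < ·) (T.drop (SA k + 1)) (T.drop (q + 1)))).card := by
      rw [← Finset.card_union_of_disjoint hdisj]
      congr 1
      ext k
      simp only [Finset.mem_filter, Finset.mem_range, Finset.mem_union]
      constructor
      · rintro ⟨hk, hlex⟩
        rw [drop_cons' T (SA k) (hSA k hk), drop_cons' T q hqlt, hqc] at hlex
        rcases lex_cons_iff'.1 hlex with h | ⟨h1, h2⟩
        · exact Or.inl ⟨hk, h⟩
        · exact Or.inr ⟨hk, h1, h2⟩
      · rintro (⟨hk, h⟩ | ⟨hk, h1, h2⟩)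
        · exact ⟨hk, by
            rw [drop_cons' T (SA k) (hSA k hk), drop_cons' T q hqlt, hqc]
            exact lex_cons_iff'.2 (Or.inl h)⟩
        · exact ⟨hk, by
            rw [drop_cons' T (SA k) (hSA k hk), drop_cons' T q hqlt, hqc]
            exact lex_cons_iff'.2 (Or.inr ⟨h1, h2⟩)⟩
    have hrank : rankBWT T SA c i
        = ((Finset.range i).filter (fun j => bwt T SA j = c)).card + 1 := by
      unfold rankBWT
      rw [Finset.range_add_one, Finset.filter_insert, if_pos hc.symm,
        Finset.card_insert_of_notMem (by simp)]
    rcases Nat.eq_zero_or_pos (SA i) with h0 | h1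
    · -- SA i = 0
      have hq' : q = T.length - 1 := by rw [hq, h0]; exact hmod0
      have hA2 : ((Finset.range T.length).filter
          (fun k => T[SA k]! = c ∧ List.Lex (· < ·) (T.drop (SA k + 1)) (T.drop (q + 1)))) = ∅ := by
        rw [Finset.filter_eq_empty_iff]
        rintro k hk ⟨-, hlex⟩
        have hdq : T.drop (q + 1) = [] := by
          apply List.drop_eq_nil_of_le
          omega
        rw [hdq] at hlex
        exact List.not_lex_nil hlex
      have hB : ((Finset.range i).filter (fun j => bwt T SA j = c)) = ∅ := by
        rw [Finset.filter_eq_empty_iff]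
        intro j hj hbwt
        rw [Finset.mem_range] at hj
        have hjlt : j < T.length := lt_trans hj hi
        have hcs : c = T[T.length - 1]! := by rw [← hqc, hq']
        have hSAj : SA j = 0 := by
          rcases Nat.eq_zero_or_pos (SA j) with h | h
          · exact h
          · exfalso
            unfold bwt at hbwt
            rw [hmod _ h (hSA j hjlt)] at hbwt
            have hlt : SA j - 1 < T.length - 1 := by
              have := hSA j hjlt
              rcases Nat.lt_or_ge (SA j - 1) (T.length - 1) with h' | h'
              · exact h'
              · exfalso
                have hEq : SA j - 1 = T.length - 1 := by omega
                rw [hEq, ← hcs] at hbwt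
                -- hbwt : c = c, fine; but then SA j = T.length, contra
                omega
            have hs := hsent _ hlt
            rw [hbwt, ← hcs] at hs
            exact lt_irrefl _ hs
        have : j = i := hinj j i hjlt hi (by rw [hSAj, h0])
        omega
      rw [hA, hsplit, hrank, hA2, hB, hcnt]
      simp
    · -- 1 ≤ SA i
      have hSAi : SA i < T.length := hSA i hi
      have hq' : q = SA i - 1 := by rw [hq]; exact hmod _ h1 hSAi
      have hq1 : q + 1 = SA i := by omega
      have hqlt' : q < T.length - 1 := by omega
      have hcgt : T[T.length - 1]! < c := by rw [← hqc]; exact hsent q hqlt'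
      have hbij : ((Finset.range T.length).filter
          (fun k => T[SA k]! = c ∧ List.Lex (· < ·) (T.drop (SA k + 1)) (T.drop (q + 1)))).card
          = ((Finset.range i).filter (fun j => bwt T SA j = c)).card := by
        apply Finset.card_nbij' (fun k => ISA (SA k + 1)) (fun j => ISA (SA j - 1))
        · intro k hk
          rw [Finset.mem_coe, Finset.mem_filter, Finset.mem_range] at hk
          obtain ⟨hk1, hk2, hk3⟩ := hk
          have hSAk : SA k < T.length := hSA k hk1
          have hSAkne : SA k ≠ T.length - 1 := by
            intro hEq
            rw [hEq] at hk2
            rw [hk2] at hcgt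
            exact lt_irrefl _ hcgt
          have hSAk1 : SA k + 1 < T.length := by omega
          have hjlt : ISA (SA k + 1) < T.length := hISAlt _ hSAk1
          have hSAj : SA (ISA (SA k + 1)) = SA k + 1 := hSAinv _ hSAk1
          rw [Finset.mem_coe, Finset.mem_filter, Finset.mem_range]
          constructor
          · apply (hlex_iff _ i hjlt hi).1
            rw [hSAj, ← hq1]
            exact hk3
          · unfold bwt
            rw [hSAj, hmod _ (by omega) hSAk1, Nat.add_sub_cancel]
            exact hk2
        · intro j hj
          rw [Finset.mem_coe, Finset.mem_filter, Finset.mem_range] at hj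
          obtain ⟨hj1, hj2⟩ := hj
          have hjlt : j < T.length := lt_trans hj1 hi
          have hSAj : SA j < T.length := hSA j hjlt
          have hSAjpos : 1 ≤ SA j := by
            by_contra hcon
            have h0 : SA j = 0 := by omega
            unfold bwt at hj2
            rw [h0, hmod0] at hj2
            rw [hj2] at hcgt
            exact lt_irrefl _ hcgt
          have hSAj1 : SA j - 1 < T.length := by omega
          have hklt : ISA (SA j - 1) < T.length := hISAlt _ hSAj1
          have hSAk : SA (ISA (SA j - 1)) = SA j - 1 := hSAinv _ hSAj1
          rw [Finset.mem_coe, Finset.mem_filter, Finset.mem_range]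
          refine ⟨hklt, ?_, ?_⟩
          · rw [hSAk]
            unfold bwt at hj2
            rw [hmod _ hSAjpos hSAj] at hj2
            exact hj2
          · rw [hSAk, hq1]
            have he : SA j - 1 + 1 = SA j := by omega
            rw [he]
            exact hsorted j i hj1 hi
        · intro k hk
          rw [Finset.mem_coe, Finset.mem_filter, Finset.mem_range] at hk
          obtain ⟨hk1, hk2, hk3⟩ := hk
          have hSAk : SA k < T.length := hSA k hk1
          have hSAkne : SA k ≠ T.length - 1 := by
            intro hEq
            rw [hEq] at hk2
            rw [hk2] at hcgt
            exact lt_irrefl _ hcgt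
          have hSAk1 : SA k + 1 < T.length := by omega
          beta_reduce
          rw [hSAinv _ hSAk1, Nat.add_sub_cancel, hISAinv k hk1]
        · intro j hj
          rw [Finset.mem_coe, Finset.mem_filter, Finset.mem_range] at hj
          obtain ⟨hj1, hj2⟩ := hj
          have hjlt : j < T.length := lt_trans hj1 hi
          have hSAj : SA j < T.length := hSA j hjlt
          have hSAjpos : 1 ≤ SA j := by
            by_contra hcon
            have h0 : SA j = 0 := by omega
            unfold bwt at hj2
            rw [h0, hmod0] at hj2
            rw [hj2] at hcgt
            exact lt_irrefl _ hcgt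
          have hSAj1 : SA j - 1 < T.length := by omega
          beta_reduce
          rw [hSAinv _ hSAj1]
          have he : SA j - 1 + 1 = SA j := by omega
          rw [he, hISAinv j hjlt]
      rw [hA, hsplit, hrank, hbij, hcnt]
      omega
  constructor
  · -- bijectivity
    have hSAbij : Set.BijOn SA (Set.Iio T.length) (Set.Iio T.length) := by
      refine ⟨fun k hk => hSA k hk, fun k hk l hl hkl => hinj k l hk hl hkl, fun p hp => ?_⟩
      exact ⟨ISA p, hISAlt p hp, hSAinv p hp⟩
    have hpredbij : Set.BijOn (fun s => (s + T.length - 1) % T.length)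
        (Set.Iio T.length) (Set.Iio T.length) := by
      refine ⟨fun s _ => Nat.mod_lt _ hn, ?_, ?_⟩
      · intro s1 h1 s2 h2 he
        simp only [Set.mem_Iio] at h1 h2
        simp only at he
        rcases Nat.eq_zero_or_pos s1 with z1 | p1 <;> rcases Nat.eq_zero_or_pos s2 with z2 | p2
        · omega
        · rw [z1, hmod0, hmod _ p2 h2] at he; omega
        · rw [z2, hmod0, hmod _ p1 h1] at he; omega
        · rw [hmod _ p1 h1, hmod _ p2 h2] at he; omega
      · intro p hp
        simp only [Set.mem_Iio] at hp
        rcases Nat.lt_or_ge p (T.length - 1) with h | h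
        · exact ⟨p + 1, by simp only [Set.mem_Iio]; omega,
            by simp only; rw [hmod _ (by omega) (by omega)]; omega⟩
        · exact ⟨0, Set.mem_Iio.2 hn, by simp only; rw [hmod0]; omega⟩
    have hISAbij : Set.BijOn ISA (Set.Iio T.length) (Set.Iio T.length) := by
      refine ⟨fun p hp => hISAlt p hp, ?_, fun k hk => ⟨SA k, hSA k hk, hISAinv k hk⟩⟩
      intro p1 h1 p2 h2 he
      rw [← hSAinv p1 h1, ← hSAinv p2 h2, he]
    have hcomp := hISAbij.comp (hpredbij.comp hSAbij)
    have hEq : Set.EqOn (ISA ∘ (fun s => (s + T.length - 1) % T.length) ∘ SA) (lf T SA)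
        (Set.Iio T.length) := by
      intro i hi
      simp only [Set.mem_Iio] at hi
      have h := hmain i hi
      unfold lf
      simp only [Function.comp]
      omega
    exact hcomp.congr hEq
  · intro p hp1 hp2
    have hIp : ISA p < T.length := hISAlt p hp2
    have h := hmain (ISA p) hIp
    rw [hSAinv p hp2, hmod p hp1 hp2] at h
    unfold lf
    omega
end

section
/- If MS[i+1] = (pos, len) are valid matching statistics at i+1 and p is any position with T[p−1] = P[i], then P[i..i+ℓ] = T[p−1..p−1+ℓ] where ℓ = min(len, LCE(p, pos)); hence setting MS[i] = (p−1, 1 + min(len, LCE(p, pos))) gives a valid occurrence (the pair matches, though possibly not maximal). -/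
/-- if `MS[i+1] = (pos, len)` is a valid occurrence at `i+1`
(`T[pos..pos+len-1] = P[i+1..i+len]`) and `p ≥ 1` is any position with
`T[p-1] = P[i]`, then with `ℓ = min(len, LCE(p, pos))` we get
`P[i..i+ℓ] = T[p-1..p-1+ℓ]`; hence `(p-1, ℓ+1)` is a valid (though possibly
non-maximal) occurrence for position `i`. -/
theorem ms_candidate_occurrence {α : Type*} (T P : List α)
    (i pos len p : ℕ)
    (hp : 1 ≤ p)
    (hlenP : i + 1 + len ≤ P.length)
    (hlenT : pos + len ≤ T.length)
    (hoccur : (T.drop pos).take len = (P.drop (i + 1)).take len)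
    (hchar : T[p - 1]? = P[i]?) :
    (P.drop i).take (min len (lce T p pos) + 1) =
      (T.drop (p - 1)).take (min len (lce T p pos) + 1) := by

  set L := lce T p pos with hL
  have hlce : (T.drop p).take L = (T.drop pos).take L := by
    rw [hL]; unfold lce
    letI := Classical.decPred (fun ℓ : ℕ => (T.drop p).take ℓ = (T.drop pos).take ℓ)
    exact Nat.findGreatest_spec (P := fun ℓ : ℕ => (T.drop p).take ℓ = (T.drop pos).take ℓ) (Nat.zero_le _) rfl
  apply List.ext_getElem?
  intro n
  rw [List.getElem?_take, List.getElem?_take, List.getElem?_drop, List.getElem?_drop]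
  split
  · rename_i hn
    rcases n with _ | j
    · simpa using hchar.symm
    · have hj1 : j < min len L := by omega
      have hjl : j < len := lt_of_lt_of_le hj1 (min_le_left _ _)
      have hjL : j < L := lt_of_lt_of_le hj1 (min_le_right _ _)
      have h1 : T[p + j]? = T[pos + j]? := by
        have := congrArg (fun l => l[j]?) hlce
        simpa [List.getElem?_take, List.getElem?_drop, hjL] using this
      have h2 : T[pos + j]? = P[i + 1 + j]? := by
        have := congrArg (fun l => l[j]?) hoccur
        simpa [List.getElem?_take, List.getElem?_drop, hjl] using this
      have heq : p - 1 + (j + 1) = p + j := by omega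
      rw [heq, h1, h2]
      congr 1
      omega
  · rfl
end
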